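/- Let X and Y be nonempty finite types and let f be a positive pmf on X × Y with (X|Y)-conditional f12 and (Y|X)-conditional f21. Define the I-projection operators on pmfs q on X × Y by I1(q)(x,y) = f12(x|y) · q2(y) and I2(q)(x,y) = f21(y|x) · q1(x), where q1 and q2 are the X- and Y-marginals of q. Then for every positive pmf q^{(0)} on X × Y, the iterates (I1 ∘ I2)^n (q^{(0)}) converge to f as n → ∞ (equivalently, I(f ; (I1 ∘ I2)^n (q^{(0)})) → 0). -/

import Mathlib

open Finset Filter

lemma doeblin_conv {Y : Type*} [Fintype Y] [Nonempty Y] (A : Y → Y → ℝ) (ε : ℝ)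
    (hε : 0 < ε) (hε2 : ε ≤ 1/2) (hA : ∀ y y', ε ≤ A y y')
    (hrow : ∀ y, ∑ y', A y y' = 1)
    (h : ℕ → Y → ℝ) (hstep : ∀ n y, h (n+1) y = ∑ y', A y y' * h n y')
    (hin : ∀ n, Finset.univ.inf' Finset.univ_nonempty (h n) ≤ 1)
    (hsu : ∀ n, 1 ≤ Finset.univ.sup' Finset.univ_nonempty (h n)) :
    ∀ y, Filter.Tendsto (fun n => h n y) Filter.atTop (nhds 1) := by
  classical
  set M : ℕ → ℝ := fun n => Finset.univ.sup' Finset.univ_nonempty (h n) with hM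
  set m : ℕ → ℝ := fun n => Finset.univ.inf' Finset.univ_nonempty (h n) with hm
  have hmM : ∀ n, m n ≤ M n := fun n => (hin n).trans (hsu n)
  have hub : ∀ n y, h n y ≤ M n := fun n y => Finset.le_sup' _ (mem_univ y)
  have hlb : ∀ n y, m n ≤ h n y := fun n y => Finset.inf'_le _ (mem_univ y)
  -- key step bounds
  have hAnn : ∀ y y', 0 ≤ A y y' := fun y y' => hε.le.trans (hA y y')
  have key_up : ∀ n y, h (n+1) y ≤ M n - ε * (M n - m n) := by
    intro n y
    obtain ⟨y0, -, hy0⟩ := Finset.exists_mem_eq_inf' (Finset.univ_nonempty) (h n)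
    rw [hstep]
    have hsplit : ∑ y', A y y' * h n y'
        = A y y0 * h n y0 + ∑ y' ∈ Finset.univ.erase y0, A y y' * h n y' := by
      exact (Finset.add_sum_erase _ _ (mem_univ y0)).symm
    rw [hsplit]
    have h1 : ∑ y' ∈ Finset.univ.erase y0, A y y' * h n y'
        ≤ ∑ y' ∈ Finset.univ.erase y0, A y y' * M n := by
      apply Finset.sum_le_sum
      intro i _
      exact mul_le_mul_of_nonneg_left (hub n i) (hAnn y i)
    have h2 : ∑ y' ∈ Finset.univ.erase y0, A y y' * M n = (1 - A y y0) * M n := by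
      rw [← Finset.sum_mul]
      congr 1
      have := Finset.add_sum_erase Finset.univ (A y) (mem_univ y0)
      rw [hrow y] at this
      linarith
    have h3 : A y y0 * h n y0 + (1 - A y y0) * M n
        = M n - A y y0 * (M n - m n) := by
      rw [← hy0]; ring
    have h4 : A y y0 * (M n - m n) ≥ ε * (M n - m n) :=
      mul_le_mul_of_nonneg_right (hA y y0) (by linarith [hmM n])
    linarith
  have key_lo : ∀ n y, m n + ε * (M n - m n) ≤ h (n+1) y := by
    intro n y
    obtain ⟨y1, -, hy1⟩ := Finset.exists_mem_eq_sup' (Finset.univ_nonempty) (h n)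
    rw [hstep]
    have hsplit : ∑ y', A y y' * h n y'
        = A y y1 * h n y1 + ∑ y' ∈ Finset.univ.erase y1, A y y' * h n y' := by
      exact (Finset.add_sum_erase _ _ (mem_univ y1)).symm
    rw [hsplit]
    have h1 : ∑ y' ∈ Finset.univ.erase y1, A y y' * m n
        ≤ ∑ y' ∈ Finset.univ.erase y1, A y y' * h n y' := by
      apply Finset.sum_le_sum
      intro i _
      exact mul_le_mul_of_nonneg_left (hlb n i) (hAnn y i)
    have h2 : ∑ y' ∈ Finset.univ.erase y1, A y y' * m n = (1 - A y y1) * m n := by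
      rw [← Finset.sum_mul]
      congr 1
      have := Finset.add_sum_erase Finset.univ (A y) (mem_univ y1)
      rw [hrow y] at this
      linarith
    have h3 : A y y1 * h n y1 + (1 - A y y1) * m n
        = m n + A y y1 * (M n - m n) := by
      rw [← hy1]; ring
    have h4 : ε * (M n - m n) ≤ A y y1 * (M n - m n) :=
      mul_le_mul_of_nonneg_right (hA y y1) (by linarith [hmM n])
    linarith
  have hMstep : ∀ n, M (n+1) ≤ M n - ε * (M n - m n) := by
    intro n
    exact Finset.sup'_le _ _ fun y _ => key_up n y
  have hmstep : ∀ n, m n + ε * (M n - m n) ≤ m (n+1) := by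
    intro n
    exact Finset.le_inf' _ _ fun y _ => key_lo n y
  have hosc : ∀ n, M n - m n ≤ (1 - 2*ε)^n * (M 0 - m 0) := by
    intro n
    induction n with
    | zero => simp
    | succ n ih =>
      have : M (n+1) - m (n+1) ≤ (1 - 2*ε) * (M n - m n) := by
        have := hMstep n; have := hmstep n; nlinarith
      calc M (n+1) - m (n+1) ≤ (1 - 2*ε) * (M n - m n) := this
        _ ≤ (1 - 2*ε) * ((1 - 2*ε)^n * (M 0 - m 0)) := by
            apply mul_le_mul_of_nonneg_left ih (by linarith)
        _ = (1 - 2*ε)^(n+1) * (M 0 - m 0) := by ring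
  intro y
  rw [← tendsto_sub_nhds_zero_iff]
  apply squeeze_zero_norm (a := fun n => (1 - 2*ε)^n * (M 0 - m 0))
  · intro n
    rw [Real.norm_eq_abs, abs_le]
    constructor
    · have := hlb n y; have := hsu n; have := hosc n; linarith
    · have := hub n y; have := hin n; have := hosc n; linarith
  · have : Tendsto (fun n : ℕ => (1 - 2*ε)^n) atTop (nhds 0) := by
      apply tendsto_pow_atTop_nhds_zero_of_lt_one (by linarith) (by linarith)
    simpa using this.mul_const (M 0 - m 0)
theorem gibbs_I_projection_converges
    {X Y : Type*} [Fintype X] [Fintype Y] [Nonempty X] [Nonempty Y]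
    (f : X × Y → ℝ) (hfpos : ∀ z, 0 < f z) (hfsum : ∑ z, f z = 1)
    (I1 I2 : (X × Y → ℝ) → (X × Y → ℝ))
    (hI1 : ∀ (q : X × Y → ℝ) (z : X × Y),
      I1 q z = (f z / ∑ x', f (x', z.2)) * ∑ x', q (x', z.2))
    (hI2 : ∀ (q : X × Y → ℝ) (z : X × Y),
      I2 q z = (f z / ∑ y', f (z.1, y')) * ∑ y', q (z.1, y'))
    (q0 : X × Y → ℝ) (hq0pos : ∀ z, 0 < q0 z) (hq0sum : ∑ z, q0 z = 1) :
    ∀ z : X × Y,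
      Filter.Tendsto (fun n : ℕ => (I1 ∘ I2)^[n] q0 z) Filter.atTop (nhds (f z)) := by
  classical
  set f1 : X → ℝ := fun x => ∑ y, f (x, y) with hf1def
  set f2 : Y → ℝ := fun y => ∑ x, f (x, y) with hf2def
  have hf1pos : ∀ x, 0 < f1 x := fun x =>
    Finset.sum_pos (fun y _ => hfpos _) Finset.univ_nonempty
  have hf2pos : ∀ y, 0 < f2 y := fun y =>
    Finset.sum_pos (fun x _ => hfpos _) Finset.univ_nonempty
  set B : Y → Y → ℝ := fun y y' => ∑ x, f (x, y) / f2 y * (f (x, y') / f1 x) with hBdef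
  have hBpos : ∀ y y', 0 < B y y' := by
    intro y y'
    apply Finset.sum_pos _ Finset.univ_nonempty
    intro x _
    exact mul_pos (div_pos (hfpos _) (hf2pos y)) (div_pos (hfpos _) (hf1pos x))
  have hBrow : ∀ y, ∑ y', B y y' = 1 := by
    intro y
    rw [show ∑ y', B y y' = ∑ y', ∑ x, f (x, y) / f2 y * (f (x, y') / f1 x) from rfl,
      Finset.sum_comm]
    have h1 : ∀ x : X, ∑ y', f (x, y) / f2 y * (f (x, y') / f1 x) = f (x, y) / f2 y := by
      intro x
      rw [← Finset.mul_sum, ← Finset.sum_div]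
      rw [show ∑ y', f (x, y') = f1 x from rfl, div_self (hf1pos x).ne', mul_one]
    rw [Finset.sum_congr rfl fun x _ => h1 x, ← Finset.sum_div]
    rw [show ∑ x, f (x, y) = f2 y from rfl, div_self (hf2pos y).ne']
  -- the iterated function on Y
  set step : (Y → ℝ) → (Y → ℝ) := fun g y => ∑ y', B y y' * g y' with hstepdef
  set h : ℕ → Y → ℝ :=
    fun n => step^[n] (fun y => ∑ x, f (x, y) / f2 y * ((∑ y', q0 (x, y')) / f1 x)) with hhdef
  have hstep : ∀ n y, h (n + 1) y = ∑ y', B y y' * h n y' := by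
    intro n y
    rw [hhdef]
    simp only [Function.iterate_succ_apply']
    rfl
  -- iterates have the form f z * h n z.2
  have hform : ∀ n (z : X × Y), (I1 ∘ I2)^[n + 1] q0 z = f z * h n z.2 := by
    intro n
    induction n with
    | zero =>
      intro z
      show I1 (I2 q0) z = f z * h 0 z.2
      rw [hI1]
      have hi2 : ∀ x' : X, I2 q0 (x', z.2)
          = f (x', z.2) / f1 x' * ∑ y', q0 (x', y') := fun x' => hI2 q0 (x', z.2)
      rw [Finset.sum_congr rfl fun x' _ => hi2 x']
      show f z / f2 z.2 * ∑ x', f (x', z.2) / f1 x' * ∑ y', q0 (x', y')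
          = f z * ∑ x, f (x, z.2) / f2 z.2 * ((∑ y', q0 (x, y')) / f1 x)
      rw [Finset.mul_sum, Finset.mul_sum]
      exact Finset.sum_congr rfl fun x _ => by ring
    | succ n ih =>
      intro z
      rw [Function.iterate_succ_apply', Function.comp_apply, hI1]
      have hi2 : ∀ x' : X, I2 ((I1 ∘ I2)^[n + 1] q0) (x', z.2)
          = f (x', z.2) / f1 x' * ∑ y', f (x', y') * h n y' := by
        intro x'
        rw [hI2]
        congr 1
        exact Finset.sum_congr rfl fun y' _ => ih (x', y')
      rw [Finset.sum_congr rfl fun x' _ => hi2 x', hstep]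
      show f z / f2 z.2 * ∑ x', f (x', z.2) / f1 x' * ∑ y', f (x', y') * h n y'
          = f z * ∑ y', (∑ x, f (x, z.2) / f2 z.2 * (f (x, y') / f1 x)) * h n y'
      simp only [Finset.mul_sum, Finset.sum_mul]
      rw [Finset.sum_comm]
      exact Finset.sum_congr rfl fun x _ =>
        Finset.sum_congr rfl fun y' _ => by ring
  -- total mass is preserved
  have hI2sum : ∀ q : X × Y → ℝ, ∑ z, I2 q z = ∑ z, q z := by
    intro q
    rw [Fintype.sum_prod_type]
    have h1 : ∀ x : X, ∑ y, I2 q (x, y) = ∑ y, q (x, y) := by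
      intro x
      have e : ∀ y : Y, I2 q (x, y) = f (x, y) / f1 x * ∑ y', q (x, y') :=
        fun y => hI2 q (x, y)
      rw [Finset.sum_congr rfl fun y _ => e y, ← Finset.sum_mul, ← Finset.sum_div]
      rw [show ∑ y, f (x, y) = f1 x from rfl, div_self (hf1pos x).ne', one_mul]
    rw [Finset.sum_congr rfl fun x _ => h1 x, ← Fintype.sum_prod_type]
  have hI1sum : ∀ q : X × Y → ℝ, ∑ z, I1 q z = ∑ z, q z := by
    intro q
    rw [Fintype.sum_prod_type_right]
    have h1 : ∀ y : Y, ∑ x, I1 q (x, y) = ∑ x, q (x, y) := by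
      intro y
      have e : ∀ x : X, I1 q (x, y) = f (x, y) / f2 y * ∑ x', q (x', y) :=
        fun x => hI1 q (x, y)
      rw [Finset.sum_congr rfl fun x _ => e x, ← Finset.sum_mul, ← Finset.sum_div]
      rw [show ∑ x, f (x, y) = f2 y from rfl, div_self (hf2pos y).ne', one_mul]
    rw [Finset.sum_congr rfl fun y _ => h1 y, ← Fintype.sum_prod_type_right]
  have hitersum : ∀ n, ∑ z, (I1 ∘ I2)^[n] q0 z = 1 := by
    intro n
    induction n with
    | zero => simpa using hq0sum
    | succ n ih =>
      rw [Function.iterate_succ_apply', Function.comp_apply, hI1sum, hI2sum, ih]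
  have hwh : ∀ n, ∑ y, f2 y * h n y = 1 := by
    intro n
    have := hitersum (n + 1)
    rw [Finset.sum_congr rfl fun z _ => hform n z, Fintype.sum_prod_type_right] at this
    rw [← this]
    refine Finset.sum_congr rfl fun y _ => ?_
    show f2 y * h n y = ∑ x, f (x, y) * h n y
    rw [Finset.sum_mul]
  have hf2sum : ∑ y, f2 y = 1 := by
    rw [← hfsum, Fintype.sum_prod_type_right]
  -- min ≤ 1 ≤ max
  have hin : ∀ n, Finset.univ.inf' Finset.univ_nonempty (h n) ≤ 1 := by
    intro n
    by_contra hc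
    push_neg at hc
    have hlt : ∑ y, f2 y * 1 < ∑ y, f2 y * h n y := by
      apply Finset.sum_lt_sum_of_nonempty Finset.univ_nonempty
      intro y _
      have : 1 < h n y := lt_of_lt_of_le hc (Finset.inf'_le _ (Finset.mem_univ y))
      exact (mul_lt_mul_iff_right₀ (hf2pos y)).mpr this
    simp only [mul_one, hf2sum, hwh n] at hlt
    exact lt_irrefl 1 hlt
  have hsu : ∀ n, 1 ≤ Finset.univ.sup' Finset.univ_nonempty (h n) := by
    intro n
    by_contra hc
    push_neg at hc
    have hlt : ∑ y, f2 y * h n y < ∑ y, f2 y * 1 := by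
      apply Finset.sum_lt_sum_of_nonempty Finset.univ_nonempty
      intro y _
      have : h n y < 1 := lt_of_le_of_lt (Finset.le_sup' _ (Finset.mem_univ y)) hc
      exact (mul_lt_mul_iff_right₀ (hf2pos y)).mpr this
    simp only [mul_one, hf2sum, hwh n] at hlt
    exact lt_irrefl 1 hlt
  -- the Doeblin constant
  set ε : ℝ := min (1 / 2)
    (Finset.univ.inf' Finset.univ_nonempty (fun p : Y × Y => B p.1 p.2)) with hεdef
  have hεpos : 0 < ε := by
    apply lt_min (by norm_num)
    rw [Finset.lt_inf'_iff]
    exact fun p _ => hBpos p.1 p.2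
  have hε2 : ε ≤ 1 / 2 := min_le_left _ _
  have hεB : ∀ y y', ε ≤ B y y' :=
    fun y y' => le_trans (min_le_right _ _) (Finset.inf'_le _ (Finset.mem_univ (y, y')))
  have hconv := doeblin_conv B ε hεpos hε2 hεB hBrow h hstep hin hsu
  intro z
  have h1 : Filter.Tendsto (fun n : ℕ => (I1 ∘ I2)^[n + 1] q0 z)
      Filter.atTop (nhds (f z)) := by
    have h2 := (hconv z.2).const_mul (f z)
    rw [mul_one] at h2
    exact h2.congr fun n => (hform n z).symm
  exact (Filter.tendsto_add_atTop_iff_nat 1).mp h1
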